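/- Let f be a polynomial in six variables X_0,…,X_5 over ℂ which is symmetric (invariant under every permutation of the variables) and homogeneous of degree 3. Then there exist a scalar a ∈ ℂ and a polynomial g with f = a·(X_0³+X_1³+X_2³+X_3³+X_4³+X_5³) + (X_0+X_1+X_2+X_3+X_4+X_5)·g. In other words, modulo the ideal generated by the first power sum, every 𝔖_6-invariant cubic form in six variables is a scalar multiple of the third power sum (this expresses that the Segre cubic primal is the unique 𝔖_6-invariant cubic threefold in the hyperplane {z_0+⋯+z_5=0} ⊂ P^5). -/

import Mathlib

open MvPolynomial Finset

lemma esymm_homog (k : ℕ) : (esymm (Fin 6) ℂ k).IsHomogeneous k := by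
  rw [esymm]
  apply MvPolynomial.IsHomogeneous.sum
  intro A hA
  have h := MvPolynomial.IsHomogeneous.prod A (fun i => (X i : MvPolynomial (Fin 6) ℂ))
    (fun _ => 1) (fun i _ => isHomogeneous_X _ _)
  simpa [(Finset.mem_powersetCard.mp hA).2] using h

lemma hc_mul (s t : MvPolynomial (Fin 6) ℂ) {m k n : ℕ} (ht : t.IsHomogeneous m)
    (hn : n = k + m) :
    homogeneousComponent n (s * t) = homogeneousComponent k s * t := by
  subst hn
  conv_lhs => rw [← sum_homogeneousComponent s, Finset.sum_mul, map_sum]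
  have h1 : ∀ j, homogeneousComponent (k + m) (homogeneousComponent j s * t)
      = if k + m = j + m then homogeneousComponent j s * t else 0 := fun j =>
    homogeneousComponent_of_mem ((mem_homogeneousSubmodule _ _).mpr
      ((homogeneousComponent_isHomogeneous j s).mul ht))
  simp_rw [h1, Nat.add_right_cancel_iff]
  rw [Finset.sum_ite_eq]
  split
  · rfl
  · next h =>
      rw [Finset.mem_range, not_lt] at h
      rw [homogeneousComponent_eq_zero k s (by omega), zero_mul]

lemma hc_mul_zero (s t : MvPolynomial (Fin 6) ℂ) {m n : ℕ} (ht : t.IsHomogeneous m)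
    (hn : n < m) :
    homogeneousComponent n (s * t) = 0 := by
  conv_lhs => rw [← sum_homogeneousComponent s, Finset.sum_mul, map_sum]
  have h1 : ∀ j, homogeneousComponent n (homogeneousComponent j s * t)
      = if n = j + m then homogeneousComponent j s * t else 0 := fun j =>
    homogeneousComponent_of_mem ((mem_homogeneousSubmodule _ _).mpr
      ((homogeneousComponent_isHomogeneous j s).mul ht))
  simp_rw [h1]
  apply Finset.sum_eq_zero
  intro j _
  rw [if_neg]
  omega
lemma newton3 : psum (Fin 6) ℂ 3 = 3 * esymm (Fin 6) ℂ 3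
    + esymm (Fin 6) ℂ 1 * psum (Fin 6) ℂ 2 - esymm (Fin 6) ℂ 2 * psum (Fin 6) ℂ 1 := by
  have h := psum_eq_mul_esymm_sub_sum (Fin 6) ℂ 3 (by norm_num)
  rw [show (Finset.HasAntidiagonal.antidiagonal 3 : Finset (ℕ × ℕ)) = {(0,3),(1,2),(2,1),(3,0)} from rfl] at h
  rw [h]
  norm_num [Finset.filter_insert, Finset.filter_singleton, Finset.sum_insert, Set.mem_Ioo]
  ring

lemma key (p : MvPolynomial (Fin 6) ℂ) :
    (∃ c : ℂ, homogeneousComponent 1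
        (aeval (fun i : Fin 6 => esymm (Fin 6) ℂ (i + 1)) p) = C c * esymm (Fin 6) ℂ 1) ∧
    (∃ (a : ℂ) (g : MvPolynomial (Fin 6) ℂ), homogeneousComponent 3
        (aeval (fun i : Fin 6 => esymm (Fin 6) ℂ (i + 1)) p)
      = C a * esymm (Fin 6) ℂ 3 + esymm (Fin 6) ℂ 1 * g) := by
  induction p using MvPolynomial.induction_on with
  | C a =>
      rw [aeval_C, algebraMap_eq]
      constructor
      · exact ⟨0, by rw [homogeneousComponent_of_mem ((mem_homogeneousSubmodule _ _).mpr
          (isHomogeneous_C _ _))]; simp⟩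
      · exact ⟨0, 0, by rw [homogeneousComponent_of_mem ((mem_homogeneousSubmodule _ _).mpr
          (isHomogeneous_C _ _))]; simp⟩
  | add p q hp hq =>
      obtain ⟨⟨c1, h1⟩, a1, g1, hg1⟩ := hp
      obtain ⟨⟨c2, h2⟩, a2, g2, hg2⟩ := hq
      rw [map_add]
      refine ⟨⟨c1 + c2, ?_⟩, a1 + a2, g1 + g2, ?_⟩
      · rw [map_add, h1, h2, C_add]; ring
      · rw [map_add, hg1, hg2, C_add]; ring
  | mul_X p i hp =>
      obtain ⟨⟨c, h1⟩, a, g, hg⟩ := hp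
      rw [map_mul, aeval_X]
      set s := aeval (fun i : Fin 6 => esymm (Fin 6) ℂ (i + 1)) p with hs
      fin_cases i
      · -- e1
        refine ⟨⟨coeff 0 s, ?_⟩, 0, homogeneousComponent 2 s, ?_⟩
        · rw [hc_mul s _ (esymm_homog 1) (show 1 = 0 + 1 by rfl), homogeneousComponent_zero]
        · rw [hc_mul s _ (esymm_homog 1) (show 3 = 2 + 1 by rfl)]
          rw [map_zero, zero_mul, zero_add, mul_comm]
      · -- e2
        refine ⟨⟨0, ?_⟩, 0, C c * esymm (Fin 6) ℂ 2, ?_⟩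
        · rw [hc_mul_zero s _ (esymm_homog 2) (by norm_num)]; simp
        · rw [hc_mul s _ (esymm_homog 2) (show 3 = 1 + 2 by rfl), h1]
          rw [map_zero, zero_mul, zero_add]; ring
      · -- e3
        refine ⟨⟨0, ?_⟩, coeff 0 s, 0, ?_⟩
        · rw [hc_mul_zero s _ (esymm_homog 3) (by norm_num)]; simp
        · rw [hc_mul s _ (esymm_homog 3) (show 3 = 0 + 3 by rfl), homogeneousComponent_zero]
          simp
      · refine ⟨⟨0, ?_⟩, 0, 0, ?_⟩
        · rw [hc_mul_zero s _ (esymm_homog 4) (by norm_num)]; simp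
        · rw [hc_mul_zero s _ (esymm_homog 4) (by norm_num)]; simp
      · refine ⟨⟨0, ?_⟩, 0, 0, ?_⟩
        · rw [hc_mul_zero s _ (esymm_homog 5) (by norm_num)]; simp
        · rw [hc_mul_zero s _ (esymm_homog 5) (by norm_num)]; simp
      · refine ⟨⟨0, ?_⟩, 0, 0, ?_⟩
        · rw [hc_mul_zero s _ (esymm_homog 6) (by norm_num)]; simp
        · rw [hc_mul_zero s _ (esymm_homog 6) (by norm_num)]; simp
theorem segre_cubic_unique_invariant (f : MvPolynomial (Fin 6) ℂ)
    (hsym : f.IsSymmetric) (hhom : f.IsHomogeneous 3) :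
    ∃ (a : ℂ) (g : MvPolynomial (Fin 6) ℂ),
      f = C a * (∑ i : Fin 6, X i ^ 3) + (∑ i : Fin 6, X i) * g := by
  obtain ⟨p, hp⟩ := esymmAlgHom_surjective (σ := Fin 6) (R := ℂ) (n := 6) (by simp)
    ⟨f, (mem_symmetricSubalgebra f).mpr hsym⟩
  have hf : aeval (fun i : Fin 6 => esymm (Fin 6) ℂ (i + 1)) p = f := by
    rw [← esymmAlgHom_apply, hp]
  obtain ⟨-, a, g, hg⟩ := key p
  rw [hf] at hg
  have hf3 : homogeneousComponent 3 f = f := by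
    rw [homogeneousComponent_of_mem ((mem_homogeneousSubmodule _ _).mpr hhom), if_pos rfl]
  rw [hf3] at hg
  refine ⟨a / 3, C (a / 3) * (esymm (Fin 6) ℂ 2 - psum (Fin 6) ℂ 2) + g, ?_⟩
  rw [show (∑ i : Fin 6, X i ^ 3) = psum (Fin 6) ℂ 3 from rfl,
    show (∑ i : Fin 6, X i) = esymm (Fin 6) ℂ 1 from (esymm_one _ _).symm,
    hg, newton3, psum_one, ← esymm_one (Fin 6) ℂ]
  have h3 : (C a : MvPolynomial (Fin 6) ℂ) = C (a / 3) * 3 := by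
    rw [show ((3 : MvPolynomial (Fin 6) ℂ)) = C 3 from (map_ofNat C 3).symm, ← C_mul,
      div_mul_cancel₀ a (three_ne_zero)]
  rw [h3]; ring
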